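/- Let A be an n×n complex matrix, u, v ∈ ℂⁿ, let m_A be the minimal polynomial of A, let p_{uv} be the polynomial satisfying p_{uv}(λ) = v* m_A(λ)(λIₙ − A)⁻¹u outside the spectrum of A, and suppose ζ is a root of p_{uv} of multiplicity exactly k ≥ 1 with m_A(ζ) ≠ 0. Write a_m = v*(ζIₙ − A)^{−m}u. Suppose λ : [T,∞) → ℂ is a function of real t ≥ T such that λ(t) is an eigenvalue of A + t u v* for every t ≥ T and λ(t) = ζ − b₁ t^{−1/k} − b₂ t^{−2/k} + o(t^{−2/k}) as t → ∞ with b₁ ≠ 0. Then b₁^{k} · a_{k+1} = 1 and b₂ = −(1/k) · b₁² a_{k+2} / a_{k+1}. -/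

import Mathlib

open Matrix Polynomial Filter Asymptotics Topology

private lemma vmv_mul {n : ℕ} (a b : Fin n → ℂ) (M : Matrix (Fin n) (Fin n) ℂ) :
    vecMulVec a b * M = vecMulVec a (Matrix.vecMul b M) := by
  ext i j
  simp only [Matrix.mul_apply, Matrix.vecMulVec_apply, Matrix.vecMul, dotProduct,
    Finset.mul_sum]
  exact Finset.sum_congr rfl fun p _ => by ring

private lemma vmv_vmv {n : ℕ} (a b c d : Fin n → ℂ) :
    vecMulVec a b * vecMulVec c d = (b ⬝ᵥ c) • vecMulVec a d := by
  ext i j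
  simp only [Matrix.mul_apply, Matrix.vecMulVec_apply, Matrix.smul_apply, dotProduct,
    smul_eq_mul, Finset.sum_mul]
  exact Finset.sum_congr rfl fun p _ => by ring

private lemma mul_vmv {n : ℕ} (M : Matrix (Fin n) (Fin n) ℂ) (c d : Fin n → ℂ) :
    M * vecMulVec c d = vecMulVec (M.mulVec c) d := by
  ext i j
  simp only [Matrix.mul_apply, Matrix.vecMulVec_apply, Matrix.mulVec, dotProduct,
    Finset.sum_mul]
  exact Finset.sum_congr rfl fun p _ => by ring

private lemma aux_eig {n : ℕ} (A : Matrix (Fin n) (Fin n) ℂ) (u v : Fin n → ℂ) (t μ : ℂ)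
    (hX : IsUnit (μ • (1 : Matrix (Fin n) (Fin n) ℂ) - A))
    (hμ : μ ∈ spectrum ℂ (A + t • vecMulVec u (star v))) :
    t * (star v ⬝ᵥ ((μ • (1 : Matrix (Fin n) (Fin n) ℂ) - A)⁻¹).mulVec u) = 1 := by
  set X := μ • (1 : Matrix (Fin n) (Fin n) ℂ) - A with hXdef
  set W := vecMulVec u (star v) with hWdef
  set φ := star v ⬝ᵥ (X⁻¹.mulVec u) with hφdef
  by_contra hne
  have hXdet : IsUnit X.det := (Matrix.isUnit_iff_isUnit_det X).mp hX
  have hXX : X * X⁻¹ = 1 := Matrix.mul_nonsing_inv X hXdet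
  have hXX' : X⁻¹ * X = 1 := Matrix.nonsing_inv_mul X hXdet
  have h1 : 1 - t * φ ≠ 0 := fun h => hne (by linear_combination -h)
  set γ := t / (1 - t * φ) with hγdef
  have hγ : γ * (1 - t * φ) = t := div_mul_cancel₀ _ h1
  have hXW : X⁻¹ * W = vecMulVec (X⁻¹.mulVec u) (star v) := by rw [hWdef, mul_vmv]
  have hkey : W * (X⁻¹ * W) = φ • W := by
    rw [hXW, hWdef, vmv_vmv]
  set B := X⁻¹ + γ • (X⁻¹ * (W * X⁻¹)) with hBdef
  have hBr : (X - t • W) * B = 1 := by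
    have e1 : X * (X⁻¹ * (W * X⁻¹)) = W * X⁻¹ := by
      rw [← Matrix.mul_assoc, hXX, Matrix.one_mul]
    have e2 : W * (X⁻¹ * (W * X⁻¹)) = φ • (W * X⁻¹) := by
      rw [← Matrix.mul_assoc, ← Matrix.mul_assoc, Matrix.mul_assoc W X⁻¹ W, hkey,
        smul_mul_assoc]
    have expand : (X - t • W) * B
        = 1 + (γ - (t + t * (γ * φ))) • (W * X⁻¹) := by
      simp only [hBdef, Matrix.sub_mul, Matrix.mul_add, smul_mul_assoc, mul_smul_comm,
        smul_smul, hXX, e1, e2]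
      module
    have hco : γ - (t + t * (γ * φ)) = 0 := by linear_combination hγ
    rw [expand, hco, zero_smul, add_zero]
  have hBl : B * (X - t • W) = 1 := by
    have e1 : (X⁻¹ * (W * X⁻¹)) * X = X⁻¹ * W := by
      rw [Matrix.mul_assoc, Matrix.mul_assoc, hXX', Matrix.mul_one]
    have e2 : (X⁻¹ * (W * X⁻¹)) * W = φ • (X⁻¹ * W) := by
      rw [Matrix.mul_assoc, Matrix.mul_assoc, ← Matrix.mul_assoc W X⁻¹ W, Matrix.mul_assoc W,
        hkey, mul_smul_comm]
    have expand : B * (X - t • W)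
        = 1 + (γ - (t + t * (γ * φ))) • (X⁻¹ * W) := by
      simp only [hBdef, Matrix.add_mul, Matrix.mul_sub, smul_mul_assoc, mul_smul_comm,
        smul_smul, hXX', e1, e2]
      module
    have hco : γ - (t + t * (γ * φ)) = 0 := by linear_combination hγ
    rw [expand, hco, zero_smul, add_zero]
  have hunit : IsUnit (X - t • W) := ⟨⟨_, B, hBr, hBl⟩, rfl⟩
  rw [spectrum.mem_iff] at hμ
  apply hμ
  have : (algebraMap ℂ (Matrix (Fin n) (Fin n) ℂ)) μ - (A + t • W) = X - t • W := by
    rw [Algebra.algebraMap_eq_smul_one, hXdef]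
    abel
  rwa [this]

private lemma aux_expand {n : ℕ} (A : Matrix (Fin n) (Fin n) ℂ) (u v : Fin n → ℂ) (ζ μ : ℂ)
    (hζ : IsUnit (ζ • (1 : Matrix (Fin n) (Fin n) ℂ) - A))
    (hμ : IsUnit (μ • (1 : Matrix (Fin n) (Fin n) ℂ) - A)) (N : ℕ) :
    star v ⬝ᵥ ((μ • (1 : Matrix (Fin n) (Fin n) ℂ) - A)⁻¹).mulVec u
      = (Finset.range N).sum (fun m => (ζ - μ) ^ m *
          (star v ⬝ᵥ ((((ζ • (1 : Matrix (Fin n) (Fin n) ℂ) - A)⁻¹) ^ (m + 1)).mulVec u)))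
        + (ζ - μ) ^ N * (star v ⬝ᵥ (((ζ • (1 : Matrix (Fin n) (Fin n) ℂ) - A)⁻¹ ^ N *
            (μ • (1 : Matrix (Fin n) (Fin n) ℂ) - A)⁻¹).mulVec u)) := by
  set Y := ζ • (1 : Matrix (Fin n) (Fin n) ℂ) - A with hYdef
  set X := μ • (1 : Matrix (Fin n) (Fin n) ℂ) - A with hXdef
  have hYX : Y = X + (ζ - μ) • 1 := by rw [hYdef, hXdef]; module
  have h1 : Y⁻¹ * Y = 1 := Matrix.nonsing_inv_mul Y ((Matrix.isUnit_iff_isUnit_det Y).mp hζ)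
  have h2 : X * X⁻¹ = 1 := Matrix.mul_nonsing_inv X ((Matrix.isUnit_iff_isUnit_det X).mp hμ)
  have step : X⁻¹ = Y⁻¹ + (ζ - μ) • (Y⁻¹ * X⁻¹) := by
    calc X⁻¹ = (Y⁻¹ * Y) * X⁻¹ := by rw [h1, Matrix.one_mul]
      _ = Y⁻¹ * (X + (ζ - μ) • 1) * X⁻¹ := by rw [← hYX]
      _ = Y⁻¹ * (X * X⁻¹) + (ζ - μ) • (Y⁻¹ * X⁻¹) := by
          simp only [Matrix.mul_add, Matrix.add_mul, mul_smul_comm, smul_mul_assoc,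
            Matrix.mul_one, Matrix.mul_assoc]
      _ = Y⁻¹ + (ζ - μ) • (Y⁻¹ * X⁻¹) := by rw [h2, Matrix.mul_one]
  induction N with
  | zero => simp
  | succ N ih =>
    rw [Finset.sum_range_succ, ih]
    have hmat : Y⁻¹ ^ N * X⁻¹ = Y⁻¹ ^ (N + 1) + (ζ - μ) • (Y⁻¹ ^ (N + 1) * X⁻¹) := by
      calc Y⁻¹ ^ N * X⁻¹ = Y⁻¹ ^ N * (Y⁻¹ + (ζ - μ) • (Y⁻¹ * X⁻¹)) := by rw [← step]
        _ = Y⁻¹ ^ (N + 1) + (ζ - μ) • (Y⁻¹ ^ (N + 1) * X⁻¹) := by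
            rw [Matrix.mul_add, mul_smul_comm, pow_succ, Matrix.mul_assoc]
    rw [hmat]
    simp only [Matrix.add_mulVec, Matrix.smul_mulVec, dotProduct_add, dotProduct_smul,
      smul_eq_mul]
    ring

private lemma aux_isUnit {n : ℕ} (A : Matrix (Fin n) (Fin n) ℂ) (μ : ℂ)
    (h : (minpoly ℂ A).eval μ ≠ 0) : IsUnit (μ • (1 : Matrix (Fin n) (Fin n) ℂ) - A) := by
  obtain ⟨g, hg⟩ := Polynomial.X_sub_C_dvd_sub_C_eval (a := μ) (p := minpoly ℂ A)
  have hm0 : Polynomial.aeval A (minpoly ℂ A) = 0 := minpoly.aeval ℂ A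
  have heq : (0 : Matrix (Fin n) (Fin n) ℂ) - ((minpoly ℂ A).eval μ) • 1
      = (A - μ • 1) * Polynomial.aeval A g := by
    have := congrArg (Polynomial.aeval A) hg
    rw [map_sub, _root_.map_mul, map_sub, Polynomial.aeval_X, Polynomial.aeval_C, hm0,
      Polynomial.aeval_C, Algebra.algebraMap_eq_smul_one, Algebra.algebraMap_eq_smul_one] at this
    exact this
  have hcomm : Commute A (Polynomial.aeval A g) := by
    simpa using (Commute.all (Polynomial.X : ℂ[X]) g).map (Polynomial.aeval A)
  have hcomm2 : Commute (μ • (1 : Matrix (Fin n) (Fin n) ℂ) - A) (Polynomial.aeval A g) :=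
    ((Commute.one_left (Polynomial.aeval A g)).smul_left μ).sub_left hcomm
  set B := ((minpoly ℂ A).eval μ)⁻¹ • Polynomial.aeval A g with hB
  have hmul : (μ • (1 : Matrix (Fin n) (Fin n) ℂ) - A) * B = 1 := by
    have h1 : (μ • (1 : Matrix (Fin n) (Fin n) ℂ) - A) * Polynomial.aeval A g
        = ((minpoly ℂ A).eval μ) • 1 := by
      have := heq
      rw [zero_sub] at this
      calc (μ • (1 : Matrix (Fin n) (Fin n) ℂ) - A) * Polynomial.aeval A g
          = -((A - μ • 1) * Polynomial.aeval A g) := by rw [← neg_sub, neg_mul]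
        _ = ((minpoly ℂ A).eval μ) • 1 := by rw [← this, neg_neg]
    rw [hB, mul_smul_comm, h1, smul_smul, inv_mul_cancel₀ h, one_smul]
  have hmul2 : B * (μ • (1 : Matrix (Fin n) (Fin n) ℂ) - A) = 1 := by
    rw [hB, smul_mul_assoc, ← hcomm2.eq, ← mul_smul_comm, ← hB, hmul]
  exact ⟨⟨_, B, hmul, hmul2⟩, rfl⟩
theorem stmt14 {n : ℕ} (A : Matrix (Fin n) (Fin n) ℂ) (u v : Fin n → ℂ)
    (p : Polynomial ℂ)
    (hp : ∀ lam ∉ spectrum ℂ A,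
      p.eval lam = (minpoly ℂ A).eval lam *
        (star v ⬝ᵥ (lam • (1 : Matrix (Fin n) (Fin n) ℂ) - A)⁻¹.mulVec u))
    (ζ : ℂ) (k : ℕ) (hk : 1 ≤ k)
    (hmult : p.rootMultiplicity ζ = k)
    (hm : (minpoly ℂ A).eval ζ ≠ 0)
    (a : ℕ → ℂ)
    (ha : ∀ m : ℕ,
      a m = star v ⬝ᵥ (((ζ • (1 : Matrix (Fin n) (Fin n) ℂ) - A)⁻¹) ^ m).mulVec u)
    (T : ℝ) (lam : ℝ → ℂ) (b₁ b₂ : ℂ) (hb₁ : b₁ ≠ 0)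
    (heig : ∀ t : ℝ, T ≤ t → lam t ∈ spectrum ℂ (A + (t : ℂ) • vecMulVec u (star v)))
    (hexp : (fun t : ℝ => lam t -
        (ζ - b₁ * ((t ^ (-(1 : ℝ) / k) : ℝ) : ℂ) - b₂ * ((t ^ (-(2 : ℝ) / k) : ℝ) : ℂ)))
      =o[atTop] fun t : ℝ => ((t ^ (-(2 : ℝ) / k) : ℝ) : ℂ)) :
    b₁ ^ k * a (k + 1) = 1 ∧
    b₂ = -(1 / (k : ℂ)) * b₁ ^ 2 * a (k + 2) / a (k + 1) := by
  have hζU : IsUnit (ζ • (1 : Matrix (Fin n) (Fin n) ℂ) - A) := aux_isUnit A ζ hm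
  have hkR : (0 : ℝ) < (k : ℝ) := by exact_mod_cast Nat.pos_of_ne_zero (by omega)
  set σ : ℝ → ℝ := fun t => t ^ (-(1 : ℝ) / (k : ℝ)) with hσdef
  set S : ℝ → ℂ := fun t => ((σ t : ℝ) : ℂ) with hSdef
  -- basic limits
  have hσ0 : Tendsto σ atTop (𝓝 0) := by
    have he : -(1 : ℝ) / (k : ℝ) = -(1 / (k : ℝ)) := by ring
    simp only [hσdef]
    simp only [he]
    exact tendsto_rpow_neg_atTop (by positivity)
  have hS0 : Tendsto S atTop (𝓝 0) := by
    simp only [hSdef]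
    have := (Complex.continuous_ofReal.tendsto 0).comp hσ0
    simpa [Function.comp_def] using this
  have hSne : ∀ᶠ t in atTop, S t ≠ 0 := by
    filter_upwards [eventually_gt_atTop (0 : ℝ)] with t ht
    simp only [hSdef, hσdef, ne_eq, Complex.ofReal_eq_zero]
    exact (Real.rpow_pos_of_pos ht _).ne'
  have hσk : ∀ᶠ t : ℝ in atTop, (t : ℂ) * S t ^ k = 1 := by
    filter_upwards [eventually_gt_atTop (0 : ℝ)] with t ht
    have h1 : σ t ^ k = t⁻¹ := by
      simp only [hσdef]
      rw [← Real.rpow_natCast (t ^ (-(1 : ℝ) / (k : ℝ))) k, ← Real.rpow_mul ht.le]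
      rw [show (-(1 : ℝ) / (k : ℝ)) * ((k : ℕ) : ℝ) = -1 by field_simp]
      exact Real.rpow_neg_one t
    have h2 : (t : ℂ) * S t ^ k = ((t * σ t ^ k : ℝ) : ℂ) := by
      simp only [hSdef]; push_cast; ring
    rw [h2, h1, mul_inv_cancel₀ ht.ne']
    simp
  have h2exp : ∀ᶠ t : ℝ in atTop, ((t ^ (-(2 : ℝ) / (k : ℝ)) : ℝ) : ℂ) = S t ^ 2 := by
    filter_upwards [eventually_gt_atTop (0 : ℝ)] with t ht
    have h1 : t ^ (-(2 : ℝ) / (k : ℝ)) = σ t ^ 2 := by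
      simp only [hσdef]; rw [← Real.rpow_natCast (t ^ (-(1 : ℝ) / (k : ℝ))) 2, ← Real.rpow_mul ht.le]
      congr 1
      push_cast
      ring
    rw [h1, hSdef]
    push_cast
    ring
  -- the little-o remainder
  set δ : ℝ → ℂ := fun t => lam t - (ζ - b₁ * S t - b₂ * S t ^ 2) with hδdef
  have hδo : δ =o[atTop] fun t => S t ^ 2 := by
    refine hexp.congr' ?_ ?_
    · filter_upwards [h2exp] with t ht
      simp only [hδdef]
      simp only [hSdef, hσdef]
      rw [← ht]
    · filter_upwards [h2exp] with t ht
      exact ht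
  have hδ2 : Tendsto (fun t => δ t / S t ^ 2) atTop (𝓝 0) := hδo.tendsto_div_nhds_zero
  have hδ1 : Tendsto (fun t => δ t / S t) atTop (𝓝 0) := by
    have h := hδ2.mul hS0
    rw [mul_zero] at h
    refine h.congr' ?_
    filter_upwards [hSne] with t ht
    field_simp
  have hδ0 : Tendsto δ atTop (𝓝 0) := by
    have h' := hδ2.mul (hS0.pow 2)
    have h : Tendsto (fun t => δ t / S t ^ 2 * S t ^ 2) atTop (𝓝 0) := by simpa using h'
    refine h.congr' ?_
    filter_upwards [hSne] with t ht
    field_simp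
  -- lam tends to ζ
  have hlam : Tendsto lam atTop (𝓝 ζ) := by
    have h : Tendsto (fun t => ζ - b₁ * S t - b₂ * S t ^ 2 + δ t) atTop
        (𝓝 (ζ - b₁ * 0 - b₂ * 0 ^ 2 + 0)) :=
      (((tendsto_const_nhds.sub (tendsto_const_nhds.mul hS0)).sub
        (tendsto_const_nhds.mul (hS0.pow 2))).add hδ0)
    have h2 : Tendsto (fun t => ζ - b₁ * S t - b₂ * S t ^ 2 + δ t) atTop (𝓝 ζ) := by
      simpa using h
    refine h2.congr fun t => ?_
    simp only [hδdef]
    ring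
  -- the slope function c
  set c : ℝ → ℂ := fun t => (ζ - lam t) / S t with hcdef
  have hc_eq : ∀ᶠ t in atTop, c t = b₁ + b₂ * S t - δ t / S t := by
    filter_upwards [hSne] with t ht
    simp only [hcdef]
    have h1 : ζ - lam t = b₁ * S t + b₂ * S t ^ 2 - δ t := by simp only [hδdef]; ring
    rw [h1]
    field_simp
  have hc : Tendsto c atTop (𝓝 b₁) := by
    have h : Tendsto (fun t => b₁ + b₂ * S t - δ t / S t) atTop (𝓝 (b₁ + b₂ * 0 - 0)) :=
      (tendsto_const_nhds.add (tendsto_const_nhds.mul hS0)).sub hδ1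
    have h2 : Tendsto (fun t => b₁ + b₂ * S t - δ t / S t) atTop (𝓝 b₁) := by simpa using h
    exact h2.congr' (by filter_upwards [hc_eq] with t ht; rw [ht])
  have he : ∀ᶠ t in atTop, ζ - lam t = c t * S t := by
    filter_upwards [hSne] with t ht
    simp only [hcdef]; rw [div_mul_cancel₀ _ ht]
  -- continuity facts for ψ
  set R : Matrix (Fin n) (Fin n) ℂ := (ζ • (1 : Matrix (Fin n) (Fin n) ℂ) - A)⁻¹ with hRdef
  set ψ : ℝ → ℂ := fun t =>
    star v ⬝ᵥ ((R ^ (k + 2)) *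
      (lam t • (1 : Matrix (Fin n) (Fin n) ℂ) - A)⁻¹).mulVec u with hψdef
  set d : ℂ → ℂ := fun μ => (μ • (1 : Matrix (Fin n) (Fin n) ℂ) - A).det with hddef
  set G : ℂ → ℂ := fun μ =>
    star v ⬝ᵥ ((R ^ (k + 2)) *
      (μ • (1 : Matrix (Fin n) (Fin n) ℂ) - A).adjugate).mulVec u with hGdef
  have hcont1 : Continuous fun μ : ℂ => μ • (1 : Matrix (Fin n) (Fin n) ℂ) - A :=
    (continuous_id.smul continuous_const).sub continuous_const
  have hdcont : Continuous d := hcont1.matrix_det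
  have hGcont : Continuous G :=
    continuous_const.dotProduct
      ((continuous_const.matrix_mul hcont1.matrix_adjugate).matrix_mulVec continuous_const)
  have hψeq : ∀ t, ψ t = (d (lam t))⁻¹ * G (lam t) := by
    intro t
    simp only [hψdef]; simp only [hddef]; simp only [hGdef]
    simp only [Matrix.inv_def, Ring.inverse_eq_inv', mul_smul_comm,
      Matrix.smul_mulVec, dotProduct_smul, smul_eq_mul]
  have hdlam : Tendsto (fun t => d (lam t)) atTop (𝓝 (d ζ)) := (hdcont.tendsto ζ).comp hlam
  have hdζ : d ζ ≠ 0 := ((Matrix.isUnit_iff_isUnit_det _).mp hζU).ne_zero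
  have hψlim : Tendsto ψ atTop (𝓝 ((d ζ)⁻¹ * G ζ)) := by
    have hGlam : Tendsto (fun t => G (lam t)) atTop (𝓝 (G ζ)) := (hGcont.tendsto ζ).comp hlam
    have h := (hdlam.inv₀ hdζ).mul hGlam
    exact h.congr fun t => (hψeq t).symm
  have hU : ∀ᶠ t in atTop, IsUnit (lam t • (1 : Matrix (Fin n) (Fin n) ℂ) - A) := by
    filter_upwards [hdlam.eventually_ne hdζ] with t ht
    exact (Matrix.isUnit_iff_isUnit_det _).mpr (isUnit_iff_ne_zero.mpr ht)
  -- master equation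
  have hmaster : ∀ᶠ t in atTop, S t ^ k =
      (Finset.range (k + 2)).sum (fun m => c t ^ m * S t ^ m * a (m + 1))
        + c t ^ (k + 2) * S t ^ (k + 2) * ψ t := by
    filter_upwards [eventually_ge_atTop T, eventually_ge_atTop (1 : ℝ), hU, hσk, he]
      with t hT ht1 hUt hσkt het
    have ht0 : (t : ℂ) ≠ 0 := by
      simp only [ne_eq, Complex.ofReal_eq_zero]
      linarith
    have heq := aux_eig A u v (t : ℂ) (lam t) hUt (heig t hT)
    have hexpnd := aux_expand A u v ζ (lam t) hζU hUt (k + 2)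
    have hφS : star v ⬝ᵥ ((lam t • (1 : Matrix (Fin n) (Fin n) ℂ) - A)⁻¹).mulVec u
        = S t ^ k := by
      apply mul_left_cancel₀ ht0
      rw [heq, hσkt]
    rw [hφS, het] at hexpnd
    rw [hexpnd, hψdef, hRdef]
    simp only [mul_pow, ← hRdef, ← ha]
  -- limit of the generic right-hand side
  have hsum_lim : ∀ j, j ≤ k → Tendsto (fun t =>
      (Finset.range (k + 2 - j)).sum (fun m => c t ^ (m + j) * S t ^ m * a (m + j + 1))
        + c t ^ (k + 2) * S t ^ (k + 2 - j) * ψ t) atTop (𝓝 (b₁ ^ j * a (j + 1))) := by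
    intro j hj
    have h1 : Tendsto (fun t =>
        (Finset.range (k + 2 - j)).sum (fun m => c t ^ (m + j) * S t ^ m * a (m + j + 1)))
        atTop (𝓝 ((Finset.range (k + 2 - j)).sum
          (fun m => b₁ ^ (m + j) * (0 : ℂ) ^ m * a (m + j + 1)))) :=
      tendsto_finset_sum _ (fun m _ => ((hc.pow (m + j)).mul (hS0.pow m)).mul tendsto_const_nhds)
    have h2 : Tendsto (fun t => c t ^ (k + 2) * S t ^ (k + 2 - j) * ψ t) atTop
        (𝓝 (b₁ ^ (k + 2) * (0 : ℂ) ^ (k + 2 - j) * ((d ζ)⁻¹ * G ζ))) :=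
      ((hc.pow _).mul (hS0.pow _)).mul hψlim
    have h3 := h1.add h2
    have hval : (Finset.range (k + 2 - j)).sum
          (fun m => b₁ ^ (m + j) * (0 : ℂ) ^ m * a (m + j + 1))
        + b₁ ^ (k + 2) * (0 : ℂ) ^ (k + 2 - j) * ((d ζ)⁻¹ * G ζ) = b₁ ^ j * a (j + 1) := by
      rw [Finset.sum_eq_single 0]
      · rw [zero_pow (show k + 2 - j ≠ 0 by omega)]
        simp
      · intro m _ hm
        rw [zero_pow hm, mul_zero, zero_mul]
      · intro h0
        exact absurd (Finset.mem_range.mpr (by omega)) h0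
    rw [hval] at h3
    exact h3
  -- key inductive identity
  have key : ∀ j, j ≤ k → ∀ᶠ t in atTop, S t ^ (k - j) =
      (Finset.range (k + 2 - j)).sum (fun m => c t ^ (m + j) * S t ^ m * a (m + j + 1))
        + c t ^ (k + 2) * S t ^ (k + 2 - j) * ψ t := by
    intro j
    induction j with
    | zero =>
      intro _
      filter_upwards [hmaster] with t ht
      simpa using ht
    | succ j ih =>
      intro hjk
      have hj : j ≤ k := by omega
      have hQj := ih hj
      have haj : a (j + 1) = 0 := by
        have hL : Tendsto (fun t => S t ^ (k - j)) atTop (𝓝 0) := by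
          have := hS0.pow (k - j)
          rwa [zero_pow (show k - j ≠ 0 by omega)] at this
        have h0 := Filter.Tendsto.congr' hQj hL
        have huniq := tendsto_nhds_unique (hsum_lim j hj) h0
        rcases mul_eq_zero.mp huniq with h | h
        · exact absurd h (pow_ne_zero _ hb₁)
        · exact h
      filter_upwards [hQj, hSne] with t hqt hst
      have hsplit : k + 2 - j = (k + 1 - j) + 1 := by omega
      rw [hsplit, Finset.sum_range_succ'] at hqt
      simp only [zero_add, pow_zero, mul_one, haj, mul_zero, add_zero] at hqt
      apply mul_left_cancel₀ hst
      rw [show k + 2 - (j + 1) = k + 1 - j from by omega]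
      calc S t * S t ^ (k - (j + 1)) = S t ^ (k - j) := by
            rw [← pow_succ']
            congr 1
            omega
        _ = (Finset.range (k + 1 - j)).sum
              (fun m => c t ^ (m + 1 + j) * S t ^ (m + 1) * a (m + 1 + j + 1))
            + c t ^ (k + 2) * S t ^ ((k + 1 - j) + 1) * ψ t := hqt
        _ = S t * ((Finset.range (k + 1 - j)).sum
              (fun m => c t ^ (m + (j + 1)) * S t ^ m * a (m + (j + 1) + 1))
            + c t ^ (k + 2) * S t ^ (k + 1 - j) * ψ t) := by
            rw [mul_add, Finset.mul_sum]
            congr 1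
            · refine Finset.sum_congr rfl fun m _ => ?_
              rw [show m + 1 + j = m + (j + 1) from by omega]
              ring
            · rw [pow_succ']
              ring
  -- first identity
  have hfirst : b₁ ^ k * a (k + 1) = 1 := by
    have hQk := key k le_rfl
    have hone : Tendsto (fun t => S t ^ (k - k)) atTop (𝓝 (1 : ℂ)) := by
      simp only [Nat.sub_self, pow_zero]
      exact tendsto_const_nhds
    have h0 := Filter.Tendsto.congr' hQk hone
    exact tendsto_nhds_unique (hsum_lim k le_rfl) h0
  -- the j = k equation, unfolded
  have hE : ∀ᶠ t in atTop, (1 : ℂ) = c t ^ k * a (k + 1) + c t ^ (k + 1) * S t * a (k + 2)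
      + c t ^ (k + 2) * S t ^ 2 * ψ t := by
    filter_upwards [key k le_rfl] with t ht
    rw [Nat.sub_self, pow_zero, show k + 2 - k = 2 from by omega, Finset.sum_range_succ,
      Finset.sum_range_one] at ht
    rw [show (0 : ℕ) + k + 1 = k + 1 from by omega, show (1 : ℕ) + k + 1 = k + 2 from by omega,
      show (1 : ℕ) + k = k + 1 from by omega, show (0 : ℕ) + k = k from by omega] at ht
    rw [ht]
    ring
  -- geometric sum factor
  have hglim : Tendsto (fun t => (Finset.range k).sum (fun i => b₁ ^ i * c t ^ (k - 1 - i)))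
      atTop (𝓝 ((k : ℂ) * b₁ ^ (k - 1))) := by
    have h1 : Tendsto (fun t => (Finset.range k).sum (fun i => b₁ ^ i * c t ^ (k - 1 - i)))
        atTop (𝓝 ((Finset.range k).sum (fun i => b₁ ^ i * b₁ ^ (k - 1 - i)))) :=
      tendsto_finset_sum _ (fun i _ => tendsto_const_nhds.mul (hc.pow _))
    have h2 : (Finset.range k).sum (fun i => b₁ ^ i * b₁ ^ (k - 1 - i))
        = (k : ℂ) * b₁ ^ (k - 1) := by
      rw [Finset.sum_congr rfl (fun i hi => by
        rw [← pow_add, show i + (k - 1 - i) = k - 1 from by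
          have := Finset.mem_range.mp hi; omega])]
      rw [Finset.sum_const, Finset.card_range, nsmul_eq_mul]
    rwa [h2] at h1
  set q : ℝ → ℂ := fun t => (b₁ - c t) / S t with hqdef
  have hq_eq : ∀ᶠ t in atTop, q t = -b₂ + δ t / S t ^ 2 := by
    filter_upwards [hSne, hc_eq] with t ht hct
    simp only [hqdef]
    rw [hct]
    field_simp
    ring
  have hqlim : Tendsto q atTop (𝓝 (-b₂)) := by
    have h : Tendsto (fun t => -b₂ + δ t / S t ^ 2) atTop (𝓝 (-b₂ + 0)) :=
      tendsto_const_nhds.add hδ2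
    rw [add_zero] at h
    exact h.congr' (by filter_upwards [hq_eq] with t ht; rw [ht])
  have hkey2 : ∀ᶠ t in atTop,
      q t * (Finset.range k).sum (fun i => b₁ ^ i * c t ^ (k - 1 - i)) * a (k + 1) =
      c t ^ (k + 1) * a (k + 2) + c t ^ (k + 2) * S t * ψ t := by
    filter_upwards [hE, hSne] with t hEt hst
    apply mul_right_cancel₀ hst
    have hqs : q t * S t = b₁ - c t := by
      simp only [hqdef]
      exact div_mul_cancel₀ _ hst
    have hg := geom_sum₂_mul b₁ (c t) k
    linear_combination ((Finset.range k).sum (fun i => b₁ ^ i * c t ^ (k - 1 - i))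
      * a (k + 1)) * hqs + a (k + 1) * hg + hfirst + hEt
  have hLHS : Tendsto (fun t =>
      q t * (Finset.range k).sum (fun i => b₁ ^ i * c t ^ (k - 1 - i)) * a (k + 1)) atTop
      (𝓝 (-b₂ * ((k : ℂ) * b₁ ^ (k - 1)) * a (k + 1))) :=
    (hqlim.mul hglim).mul tendsto_const_nhds
  have hRHS : Tendsto (fun t => c t ^ (k + 1) * a (k + 2) + c t ^ (k + 2) * S t * ψ t) atTop
      (𝓝 (b₁ ^ (k + 1) * a (k + 2) + b₁ ^ (k + 2) * 0 * ((d ζ)⁻¹ * G ζ))) :=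
    ((hc.pow _).mul tendsto_const_nhds).add (((hc.pow _).mul hS0).mul hψlim)
  have hfin : -b₂ * ((k : ℂ) * b₁ ^ (k - 1)) * a (k + 1) = b₁ ^ (k + 1) * a (k + 2) := by
    have h2 := Filter.Tendsto.congr' hkey2 hLHS
    have h3 := tendsto_nhds_unique h2 hRHS
    rw [mul_zero, zero_mul, add_zero] at h3
    exact h3
  have ha1 : a (k + 1) ≠ 0 := by
    intro h
    rw [h, mul_zero] at hfirst
    exact zero_ne_one hfirst
  have hkc : (k : ℂ) ≠ 0 := Nat.cast_ne_zero.mpr (by omega)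
  have hb1k : b₁ ^ (k - 1) * b₁ = b₁ ^ k := by
    rw [← pow_succ]
    congr 1
    omega
  have h5 : -b₂ * (k : ℂ) = b₁ ^ (k + 2) * a (k + 2) := by
    linear_combination b₁ * hfin + (b₂ * (k : ℂ) * a (k + 1)) * hb1k + (k : ℂ) * b₂ * hfirst
  refine ⟨hfirst, ?_⟩
  field_simp
  linear_combination (-(a (k + 1))) * h5 + (-(b₁ ^ 2) * a (k + 2)) * hfirst
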